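/- arXiv:2207.05945 — 2 statements merged into one kernel-verified Lean document; each statement's English description precedes it below -/
import Mathlib

section
/- Let $p \in [1,2]$ and $A \in \mathbb{R}^{n \times d}$ have full column rank with $\ell_p$ Lewis weights $\overline{w}_1, \dots, \overline{w}_n$. Suppose positive weights $w_1, \dots, w_n$ satisfy $\alpha w_i^{2/p} \le a_i^\top (\sum_j w_j^{1-2/p} a_j a_j^\top)^{-1} a_i \le \beta w_i^{2/p}$ for all $i$, where $0 < \alpha \le \beta$. Then $\alpha w_i \le \overline{w}_i \le \beta w_i$ for all $i$. -/
open Matrix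

section Helpers

variable {n d : ℕ}

private lemma sumMat_eq (A : Matrix (Fin n) (Fin d) ℝ) (f : Fin n → ℝ) :
    Aᵀ * Matrix.diagonal f * A = ∑ j, f j • Matrix.vecMulVec (A j) (A j) := by
  ext k l
  simp only [Matrix.mul_apply, Matrix.mul_diagonal, Matrix.sum_apply, Matrix.smul_apply,
    Matrix.vecMulVec_apply, Matrix.transpose_apply, smul_eq_mul]
  refine Finset.sum_congr rfl fun j _ => ?_
  rw [Finset.sum_eq_single j]
  · simp [Matrix.diagonal_apply_eq]; ring
  · intro b _ hb
    simp [Matrix.diagonal_apply_ne f hb]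
  · intro h
    exact absurd (Finset.mem_univ j) h

private lemma sum_mulVec' (s : Finset (Fin n)) (M : Fin n → Matrix (Fin d) (Fin d) ℝ)
    (x : Fin d → ℝ) : (∑ j ∈ s, M j).mulVec x = ∑ j ∈ s, (M j).mulVec x := by
  ext k
  simp [Matrix.mulVec, dotProduct, Matrix.sum_apply, Finset.sum_mul]
  exact Finset.sum_comm

private lemma dot_sum' (s : Finset (Fin n)) (v : Fin n → (Fin d → ℝ)) (x : Fin d → ℝ) :
    x ⬝ᵥ (∑ j ∈ s, v j) = ∑ j ∈ s, x ⬝ᵥ v j := by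
  simp [dotProduct, Finset.sum_apply, Finset.mul_sum]
  exact Finset.sum_comm

private lemma quad_sum (A : Matrix (Fin n) (Fin d) ℝ) (f : Fin n → ℝ) (x : Fin d → ℝ) :
    x ⬝ᵥ (∑ j, f j • Matrix.vecMulVec (A j) (A j)).mulVec x
      = ∑ j, f j * (A j ⬝ᵥ x) ^ 2 := by
  rw [sum_mulVec', dot_sum']
  refine Finset.sum_congr rfl fun j _ => ?_
  simp [Matrix.mulVec, dotProduct, Matrix.vecMulVec_apply, Finset.mul_sum,
    Finset.sum_mul, pow_two, mul_assoc, mul_comm, mul_left_comm]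

private lemma posdef_sum (A : Matrix (Fin n) (Fin d) ℝ)
    (hinj : Function.Injective A.mulVec) (f : Fin n → ℝ) (hf : ∀ j, 0 < f j) :
    (∑ j, f j • Matrix.vecMulVec (A j) (A j)).PosDef := by
  refine Matrix.PosDef.of_dotProduct_mulVec_pos ?_ ?_
  · ext k l
    simp only [Matrix.conjTranspose_apply, Matrix.sum_apply, Matrix.smul_apply,
      Matrix.vecMulVec_apply, smul_eq_mul, star_trivial]
    refine Finset.sum_congr rfl fun j _ => ?_
    ring
  · intro x hx
    rw [star_trivial, quad_sum]
    have hAx : A.mulVec x ≠ 0 := by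
      intro h
      exact hx (hinj (by simpa using h))
    obtain ⟨j, hj⟩ : ∃ j, A j ⬝ᵥ x ≠ 0 := by
      by_contra hcon
      push_neg at hcon
      exact hAx (funext fun j => hcon j)
    refine Finset.sum_pos' (fun j' _ => mul_nonneg (hf j').le (sq_nonneg _))
      ⟨j, Finset.mem_univ j, ?_⟩
    exact mul_pos (hf j) (sq_pos_of_ne_zero hj)

private lemma symm_dot {M : Matrix (Fin d) (Fin d) ℝ} (hM : M.IsHermitian)
    (u v : Fin d → ℝ) : u ⬝ᵥ M.mulVec v = v ⬝ᵥ M.mulVec u := by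
  have hMt : Mᵀ = M := by
    have := hM
    rwa [Matrix.IsHermitian, Matrix.conjTranspose_eq_transpose_of_trivial] at this
  rw [Matrix.dotProduct_mulVec, ← Matrix.mulVec_transpose, hMt, dotProduct_comm]

/-- Loewner-type comparison through the inverse, via quadratic forms only. -/
private lemma inv_quad_le {M N : Matrix (Fin d) (Fin d) ℝ}
    (hM : M.PosDef) (hN : N.PosDef)
    (h : ∀ x, x ⬝ᵥ M.mulVec x ≤ x ⬝ᵥ N.mulVec x) (x : Fin d → ℝ) :
    x ⬝ᵥ N⁻¹.mulVec x ≤ x ⬝ᵥ M⁻¹.mulVec x := by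
  set y := N⁻¹.mulVec x with hy
  set z := M⁻¹.mulVec x with hz
  have hNdet : IsUnit N.det := isUnit_iff_ne_zero.mpr hN.det_pos.ne'
  have hMdet : IsUnit M.det := isUnit_iff_ne_zero.mpr hM.det_pos.ne'
  have hNy : N.mulVec y = x := by
    rw [hy, Matrix.mulVec_mulVec, Matrix.mul_nonsing_inv _ hNdet, Matrix.one_mulVec]
  have hMz : M.mulVec z = x := by
    rw [hz, Matrix.mulVec_mulVec, Matrix.mul_nonsing_inv _ hMdet, Matrix.one_mulVec]
  have e1 : y ⬝ᵥ N.mulVec y = x ⬝ᵥ y := by rw [hNy, dotProduct_comm]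
  have e2 : y ⬝ᵥ M.mulVec z = x ⬝ᵥ y := by rw [hMz, dotProduct_comm]
  have e3 : z ⬝ᵥ M.mulVec y = x ⬝ᵥ y := by
    rw [symm_dot hM.isHermitian, hMz, dotProduct_comm]
  have e4 : z ⬝ᵥ M.mulVec z = x ⬝ᵥ z := by rw [hMz, dotProduct_comm]
  have hpsd : 0 ≤ (y - z) ⬝ᵥ M.mulVec (y - z) := by
    have := hM.posSemidef.dotProduct_mulVec_nonneg (y - z)
    simpa using this
  have hexp : (y - z) ⬝ᵥ M.mulVec (y - z)
      = y ⬝ᵥ M.mulVec y - y ⬝ᵥ M.mulVec z - z ⬝ᵥ M.mulVec y + z ⬝ᵥ M.mulVec z := by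
    rw [Matrix.mulVec_sub, sub_dotProduct, dotProduct_sub, dotProduct_sub]
    ring
  have hyy := h y
  rw [hexp, e2, e3, e4] at hpsd
  linarith [e1 ▸ hyy]

private lemma quad_smul (c : ℝ) (M : Matrix (Fin d) (Fin d) ℝ) (x : Fin d → ℝ) :
    x ⬝ᵥ (c • M).mulVec x = c * (x ⬝ᵥ M.mulVec x) := by
  rw [Matrix.smul_mulVec, dotProduct_smul, smul_eq_mul]

private lemma posdef_smul {M : Matrix (Fin d) (Fin d) ℝ} (hM : M.PosDef) {c : ℝ}
    (hc : 0 < c) : (c • M).PosDef := by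
  refine Matrix.PosDef.of_dotProduct_mulVec_pos ?_ (fun x hx => ?_)
  · show (c • M)ᴴ = c • M
    rw [Matrix.conjTranspose_smul, star_trivial, hM.1]
  · rw [star_trivial, quad_smul]
    have := hM.dotProduct_mulVec_pos hx
    rw [star_trivial] at this
    exact mul_pos hc this

private lemma smulInvAux {M : Matrix (Fin d) (Fin d) ℝ} (hM : M.PosDef) {c : ℝ} (hc : c ≠ 0) :
    (c • M)⁻¹ = c⁻¹ • M⁻¹ := by
  apply Matrix.inv_eq_right_inv
  rw [Matrix.smul_mul, Matrix.mul_smul, smul_smul,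
    Matrix.mul_nonsing_inv _ (isUnit_iff_ne_zero.mpr hM.det_pos.ne'),
    mul_inv_cancel₀ hc, one_smul]

end Helpers

/-- If positive weights `w` satisfy the two-sided fixed-point sandwich condition
`α wᵢ^{2/p} ≤ aᵢᵀ (∑ⱼ wⱼ^{1-2/p} aⱼ aⱼᵀ)⁻¹ aᵢ ≤ β wᵢ^{2/p}`, then the true Lewis weights
`w̄` of `A` satisfy `α wᵢ ≤ w̄ᵢ ≤ β wᵢ`. -/
theorem stmt_5 {n d : ℕ} (p : ℝ) (hp1 : 1 ≤ p) (hp2 : p ≤ 2)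
    (A : Matrix (Fin n) (Fin d) ℝ) (hA : A.rank = d)
    (α β : ℝ) (hα : 0 < α) (hαβ : α ≤ β)
    (w : Fin n → ℝ) (hwpos : ∀ i, 0 < w i)
    (hsand : ∀ i,
      α * w i ^ ((2 : ℝ) / p) ≤
        A i ⬝ᵥ ((∑ j, (w j ^ (1 - 2 / p)) • Matrix.vecMulVec (A j) (A j))⁻¹).mulVec (A i) ∧
      A i ⬝ᵥ ((∑ j, (w j ^ (1 - 2 / p)) • Matrix.vecMulVec (A j) (A j))⁻¹).mulVec (A i) ≤
        β * w i ^ ((2 : ℝ) / p))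
    (wbar : Fin n → ℝ) (hwbarpos : ∀ i, 0 < wbar i)
    (hwbar : ∀ i, wbar i =
      (A i ⬝ᵥ ((Aᵀ * Matrix.diagonal (fun t => wbar t ^ (1 - 2 / p)) * A)⁻¹).mulVec (A i))
        ^ (p / 2)) :
    ∀ i, α * w i ≤ wbar i ∧ wbar i ≤ β * w i := by
  intro i
  have hp0 : (0:ℝ) < p := lt_of_lt_of_le one_pos hp1
  have hβ : (0:ℝ) < β := lt_of_lt_of_le hα hαβ
  set e : ℝ := 1 - 2 / p with he
  have h2p : (1:ℝ) ≤ 2 / p := (le_div_iff₀ hp0).mpr (by linarith)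
  have he0 : e ≤ 0 := by rw [he]; linarith
  have hpe : p ≠ 0 := hp0.ne'
  -- injectivity of mulVec from full column rank
  have hinj : Function.Injective A.mulVec := by
    have hA' : Module.finrank ℝ ↥(LinearMap.range A.mulVecLin) = d := hA
    have hrn := A.mulVecLin.finrank_range_add_finrank_ker
    rw [hA', Module.finrank_fin_fun] at hrn
    have hker : LinearMap.ker A.mulVecLin = ⊥ :=
      Submodule.finrank_eq_zero.mp (by omega)
    have := LinearMap.ker_eq_bot.mp hker
    intro x y hxy
    exact this (by simpa [Matrix.mulVecLin_apply] using hxy)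
  set Bw : Matrix (Fin d) (Fin d) ℝ := ∑ j, (w j ^ e) • Matrix.vecMulVec (A j) (A j) with hBwdef
  set Bb : Matrix (Fin d) (Fin d) ℝ :=
    ∑ j, (wbar j ^ e) • Matrix.vecMulVec (A j) (A j) with hBbdef
  have hBw : Bw.PosDef := posdef_sum A hinj _ fun j => Real.rpow_pos_of_pos (hwpos j) e
  have hBb : Bb.PosDef := posdef_sum A hinj _ fun j => Real.rpow_pos_of_pos (hwbarpos j) e
  have hwbar' : ∀ k, wbar k = (A k ⬝ᵥ Bb⁻¹.mulVec (A k)) ^ (p / 2) := by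
    intro k
    rw [hwbar k, sumMat_eq]
  have hqbar_nonneg : ∀ k, 0 ≤ A k ⬝ᵥ Bb⁻¹.mulVec (A k) := by
    intro k
    have := hBb.inv.posSemidef.dotProduct_mulVec_nonneg (A k)
    rwa [star_trivial] at this
  have hexp1 : (2 / p) * (p / 2) = 1 := by field_simp
  have hexp2 : (-e) * (p / 2) = 1 - p / 2 := by rw [he]; field_simp; ring
  -- ===== upper bound =====
  have hupper : ∀ k, wbar k ≤ β * w k := by
    obtain ⟨i0, -, hi0⟩ := Finset.exists_max_image Finset.univ (fun j => wbar j / w j)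
      ⟨i, Finset.mem_univ i⟩
    set t := wbar i0 / w i0 with htdef
    have ht : 0 < t := div_pos (hwbarpos i0) (hwpos i0)
    have hub : ∀ j, wbar j ≤ t * w j := by
      intro j
      have := hi0 j (Finset.mem_univ j)
      exact (div_le_iff₀ (hwpos j)).mp this
    have hcmp : ∀ x, x ⬝ᵥ (t ^ e • Bw).mulVec x ≤ x ⬝ᵥ Bb.mulVec x := by
      intro x
      rw [quad_smul, hBwdef, hBbdef, quad_sum, quad_sum, Finset.mul_sum]
      refine Finset.sum_le_sum fun j _ => ?_
      rw [← mul_assoc, ← Real.mul_rpow ht.le (hwpos j).le]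
      exact mul_le_mul_of_nonneg_right
        (Real.rpow_le_rpow_of_nonpos (hwbarpos j) (hub j) he0) (sq_nonneg _)
    have hMpd : (t ^ e • Bw).PosDef := posdef_smul hBw (Real.rpow_pos_of_pos ht e)
    have hkey := inv_quad_le hMpd hBb hcmp (A i0)
    rw [smulInvAux hBw (Real.rpow_pos_of_pos ht e).ne', quad_smul] at hkey
    have hq := (hsand i0).2
    have hchain : A i0 ⬝ᵥ Bb⁻¹.mulVec (A i0) ≤ (t ^ e)⁻¹ * (β * w i0 ^ ((2:ℝ) / p)) := by
      refine hkey.trans ?_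
      exact mul_le_mul_of_nonneg_left hq (by positivity)
    have hwle : wbar i0 ≤ ((t ^ e)⁻¹ * (β * w i0 ^ ((2:ℝ) / p))) ^ (p / 2) := by
      rw [hwbar' i0]
      exact Real.rpow_le_rpow (hqbar_nonneg i0) hchain (by positivity)
    have hrhs : ((t ^ e)⁻¹ * (β * w i0 ^ ((2:ℝ) / p))) ^ (p / 2)
        = t ^ (1 - p / 2) * (β ^ (p / 2) * w i0) := by
      rw [← Real.rpow_neg ht.le,
        Real.mul_rpow (Real.rpow_nonneg ht.le _)
          (mul_nonneg hβ.le (Real.rpow_nonneg (hwpos i0).le _)),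
        Real.mul_rpow hβ.le (Real.rpow_nonneg (hwpos i0).le _), ← Real.rpow_mul ht.le,
        ← Real.rpow_mul (hwpos i0).le, hexp1, hexp2, Real.rpow_one]
    have hwi0 : wbar i0 = t * w i0 := by
      rw [htdef, div_mul_cancel₀ _ (hwpos i0).ne']
    have ht2 : t ≤ t ^ (1 - p / 2) * β ^ (p / 2) := by
      have := hwle
      rw [hrhs, hwi0] at this
      have h3 : t * w i0 ≤ (t ^ (1 - p / 2) * β ^ (p / 2)) * w i0 := by
        rw [mul_assoc]; exact this
      exact le_of_mul_le_mul_right h3 (hwpos i0)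
    have htβ : t ≤ β := by
      have hts : t = t ^ (p / 2) * t ^ (1 - p / 2) := by
        rw [← Real.rpow_add ht]; norm_num
      have h4 : t ^ (p / 2) * t ^ (1 - p / 2) ≤ β ^ (p / 2) * t ^ (1 - p / 2) := by
        rw [← hts]; linarith [ht2]
      have h5 : t ^ (p / 2) ≤ β ^ (p / 2) :=
        le_of_mul_le_mul_right h4 (Real.rpow_pos_of_pos ht _)
      exact (Real.rpow_le_rpow_iff ht.le hβ.le (by positivity)).mp h5
    intro k
    calc wbar k ≤ t * w k := hub k
      _ ≤ β * w k := mul_le_mul_of_nonneg_right htβ (hwpos k).le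
  -- ===== lower bound =====
  have hlower : ∀ k, α * w k ≤ wbar k := by
    obtain ⟨i1, -, hi1⟩ := Finset.exists_min_image Finset.univ (fun j => wbar j / w j)
      ⟨i, Finset.mem_univ i⟩
    set s := wbar i1 / w i1 with hsdef
    have hs : 0 < s := div_pos (hwbarpos i1) (hwpos i1)
    have hlb : ∀ j, s * w j ≤ wbar j := by
      intro j
      have := hi1 j (Finset.mem_univ j)
      exact (le_div_iff₀ (hwpos j)).mp this
    have hcmp : ∀ x, x ⬝ᵥ Bb.mulVec x ≤ x ⬝ᵥ (s ^ e • Bw).mulVec x := by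
      intro x
      rw [quad_smul, hBwdef, hBbdef, quad_sum, quad_sum, Finset.mul_sum]
      refine Finset.sum_le_sum fun j _ => ?_
      rw [← mul_assoc, ← Real.mul_rpow hs.le (hwpos j).le]
      exact mul_le_mul_of_nonneg_right
        (Real.rpow_le_rpow_of_nonpos (mul_pos hs (hwpos j)) (hlb j) he0) (sq_nonneg _)
    have hMpd : (s ^ e • Bw).PosDef := posdef_smul hBw (Real.rpow_pos_of_pos hs e)
    have hkey := inv_quad_le hBb hMpd hcmp (A i1)
    rw [smulInvAux hBw (Real.rpow_pos_of_pos hs e).ne', quad_smul] at hkey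
    have hq := (hsand i1).1
    have hchain : (s ^ e)⁻¹ * (α * w i1 ^ ((2:ℝ) / p)) ≤ A i1 ⬝ᵥ Bb⁻¹.mulVec (A i1) := by
      refine le_trans ?_ hkey
      exact mul_le_mul_of_nonneg_left hq (by positivity)
    have hwge : ((s ^ e)⁻¹ * (α * w i1 ^ ((2:ℝ) / p))) ^ (p / 2) ≤ wbar i1 := by
      rw [hwbar' i1]
      exact Real.rpow_le_rpow
        (mul_nonneg (inv_nonneg.mpr (Real.rpow_pos_of_pos hs e).le)
          (mul_nonneg hα.le (Real.rpow_nonneg (hwpos i1).le _))) hchain (by positivity)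
    have hrhs : ((s ^ e)⁻¹ * (α * w i1 ^ ((2:ℝ) / p))) ^ (p / 2)
        = s ^ (1 - p / 2) * (α ^ (p / 2) * w i1) := by
      rw [← Real.rpow_neg hs.le,
        Real.mul_rpow (Real.rpow_nonneg hs.le _)
          (mul_nonneg hα.le (Real.rpow_nonneg (hwpos i1).le _)),
        Real.mul_rpow hα.le (Real.rpow_nonneg (hwpos i1).le _), ← Real.rpow_mul hs.le,
        ← Real.rpow_mul (hwpos i1).le, hexp1, hexp2, Real.rpow_one]
    have hwi1 : wbar i1 = s * w i1 := by
      rw [hsdef, div_mul_cancel₀ _ (hwpos i1).ne']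
    have hs2 : s ^ (1 - p / 2) * α ^ (p / 2) ≤ s := by
      have := hwge
      rw [hrhs, hwi1] at this
      have h3 : (s ^ (1 - p / 2) * α ^ (p / 2)) * w i1 ≤ s * w i1 := by
        rw [mul_assoc]; exact this
      exact le_of_mul_le_mul_right h3 (hwpos i1)
    have hαs : α ≤ s := by
      have hts : s = s ^ (p / 2) * s ^ (1 - p / 2) := by
        rw [← Real.rpow_add hs]; norm_num
      have h4 : α ^ (p / 2) * s ^ (1 - p / 2) ≤ s ^ (p / 2) * s ^ (1 - p / 2) := by
        rw [← hts]; linarith [hs2]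
      have h5 : α ^ (p / 2) ≤ s ^ (p / 2) :=
        le_of_mul_le_mul_right h4 (Real.rpow_pos_of_pos hs _)
      exact (Real.rpow_le_rpow_iff hα.le hs.le (by positivity)).mp h5
    intro k
    calc α * w k ≤ s * w k := mul_le_mul_of_nonneg_right hαs (hwpos k).le
      _ ≤ wbar k := hlb k
  exact ⟨hlower i, hupper i⟩
end

section
/- Let $p \in [1,2]$ and $A \in \mathbb{R}^{n \times d}$ have full column rank. Let $B \in \mathbb{R}^{n \times d}$ have the same rows as $A$ except row $j$ is rescaled by a factor $\alpha \in [0,1]$, i.e., $b_j = \alpha a_j$. Then for all $i \ne j$, $w_i(B) \ge w_i(A)$. -/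
open Matrix

section Aux

lemma quadform {n d : ℕ} (A : Matrix (Fin n) (Fin d) ℝ) (g : Fin n → ℝ) (x : Fin d → ℝ) :
    x ⬝ᵥ (Aᵀ * Matrix.diagonal g * A).mulVec x = ∑ i, g i * (A.mulVec x i)^2 := by
  rw [← Matrix.mulVec_mulVec, ← Matrix.mulVec_mulVec, Matrix.dotProduct_mulVec,
    Matrix.vecMul_transpose]
  simp [dotProduct, Matrix.mulVec_diagonal]
  exact Finset.sum_congr rfl fun i _ => by ring

lemma inj_of_rank {n d : ℕ} (A : Matrix (Fin n) (Fin d) ℝ) (hA : A.rank = d) :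
    Function.Injective A.mulVec := by
  have h := LinearMap.finrank_range_add_finrank_ker A.mulVecLin
  rw [Matrix.rank] at hA
  simp only [hA, Module.finrank_pi, Fintype.card_fin] at h
  have hker : LinearMap.ker A.mulVecLin = ⊥ := by
    rw [← Submodule.finrank_eq_zero (S := LinearMap.ker A.mulVecLin)]
    omega
  have := LinearMap.ker_eq_bot.mp hker
  intro x y hxy
  exact this (by simpa [Matrix.mulVecLin_apply] using hxy)

lemma posdef_gram {n d : ℕ} (A : Matrix (Fin n) (Fin d) ℝ) (g : Fin n → ℝ)
    (hg : ∀ i, 0 < g i) (hinj : Function.Injective A.mulVec) :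
    (Aᵀ * Matrix.diagonal g * A).PosDef := by
  refine Matrix.PosDef.of_dotProduct_mulVec_pos ?_ ?_
  · unfold Matrix.IsHermitian
    rw [Matrix.conjTranspose_eq_transpose_of_trivial]
    rw [Matrix.transpose_mul, Matrix.transpose_mul, Matrix.transpose_transpose,
      Matrix.diagonal_transpose, Matrix.mul_assoc]
  · intro x hx
    have hq := quadform A g x
    simp only [star_trivial]
    rw [hq]
    have hAx : A.mulVec x ≠ 0 := by
      intro h
      exact hx (hinj (by simpa using h))
    have : ∃ i, A.mulVec x i ≠ 0 := by
      by_contra hc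
      push_neg at hc
      exact hAx (funext hc)
    obtain ⟨i0, hi0⟩ := this
    apply Finset.sum_pos' (fun i _ => mul_nonneg (hg i).le (sq_nonneg _))
    exact ⟨i0, Finset.mem_univ _, mul_pos (hg i0) (by positivity)⟩

lemma inv_quad {d : ℕ} (P Q : Matrix (Fin d) (Fin d) ℝ)
    (hP : P.PosDef) (hQ : Q.PosDef) (c : ℝ) (hc : 0 < c)
    (h : ∀ x, c * (x ⬝ᵥ Q.mulVec x) ≤ x ⬝ᵥ P.mulVec x) :
    ∀ x, x ⬝ᵥ P⁻¹.mulVec x ≤ c⁻¹ * (x ⬝ᵥ Q⁻¹.mulVec x) := by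
  intro x
  have hPdet : IsUnit P.det := hP.det_pos.ne'.isUnit
  have hQdet : IsUnit Q.det := hQ.det_pos.ne'.isUnit
  set y := P⁻¹.mulVec x with hy
  have hPy : P.mulVec y = x := by
    rw [hy, Matrix.mulVec_mulVec, Matrix.mul_nonsing_inv _ hPdet, Matrix.one_mulVec]
  set z := Q⁻¹.mulVec x with hz
  have hQz : Q.mulVec z = x := by
    rw [hz, Matrix.mulVec_mulVec, Matrix.mul_nonsing_inv _ hQdet, Matrix.one_mulVec]
  have hQsym : ∀ a b : Fin d → ℝ, a ⬝ᵥ Q.mulVec b = Q.mulVec a ⬝ᵥ b := by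
    intro a b
    rw [Matrix.dotProduct_mulVec, ← Matrix.vecMul_transpose]
    have : Qᵀ = Q := by
      have := hQ.1
      rwa [Matrix.IsHermitian, Matrix.conjTranspose_eq_transpose_of_trivial] at this
    rw [this]
  set u := y - c⁻¹ • z with hu
  have hpsd : 0 ≤ u ⬝ᵥ Q.mulVec u := by
    have := hQ.posSemidef.dotProduct_mulVec_nonneg u
    simpa using this
  have expand : u ⬝ᵥ Q.mulVec u
      = y ⬝ᵥ Q.mulVec y - 2 * c⁻¹ * (x ⬝ᵥ y) + c⁻¹ * c⁻¹ * (x ⬝ᵥ z) := by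
    rw [hu, Matrix.mulVec_sub, Matrix.mulVec_smul]
    rw [sub_dotProduct, dotProduct_sub, dotProduct_sub]
    rw [hQz]
    have h1 : y ⬝ᵥ x = x ⬝ᵥ y := dotProduct_comm _ _
    have h2 : z ⬝ᵥ Q.mulVec y = x ⬝ᵥ y := by rw [hQsym, hQz]
    have h3 : z ⬝ᵥ x = x ⬝ᵥ z := dotProduct_comm _ _
    simp only [smul_dotProduct, dotProduct_smul, smul_eq_mul, h1, h2, h3]
    ring
  have hyQy : c * (y ⬝ᵥ Q.mulVec y) ≤ x ⬝ᵥ y := by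
    have := h y
    rw [hPy] at this
    rwa [dotProduct_comm y x] at this
  have key : 0 ≤ x ⬝ᵥ y - 2 * (x ⬝ᵥ y) + c⁻¹ * (x ⬝ᵥ z) := by
    have h0 : 0 ≤ c * (u ⬝ᵥ Q.mulVec u) := mul_nonneg hc.le hpsd
    rw [expand] at h0
    have expand2 : c * (y ⬝ᵥ Q.mulVec y - 2 * c⁻¹ * (x ⬝ᵥ y) + c⁻¹ * c⁻¹ * (x ⬝ᵥ z))
        = c * (y ⬝ᵥ Q.mulVec y) - 2 * (x ⬝ᵥ y) + c⁻¹ * (x ⬝ᵥ z) := by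
      field_simp
    rw [expand2] at h0
    linarith [hyQy]
  have : x ⬝ᵥ y ≤ c⁻¹ * (x ⬝ᵥ z) := by linarith
  simpa [hy, hz] using this

end Aux

/-- The `ℓ_p` Lewis weights of `A`, as a predicate: positive weights satisfying the
fixed-point equation `wᵢ = (aᵢᵀ (Aᵀ W^{1-2/p} A)⁻¹ aᵢ)^{p/2}`. -/
def IsLewisWeights (p : ℝ) {n d : ℕ} (A : Matrix (Fin n) (Fin d) ℝ)
    (w : Fin n → ℝ) : Prop :=
  (∀ i, 0 < w i) ∧
  ∀ i, w i =
    (A i ⬝ᵥ ((Aᵀ * Matrix.diagonal (fun t => w t ^ (1 - 2 / p)) * A)⁻¹).mulVec (A i))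
      ^ (p / 2)

/-- Rescaling row `j` of `A` by a factor `α ∈ [0,1]` does not decrease the Lewis weights
of the other rows. -/
theorem stmt_7 {n d : ℕ} (p : ℝ) (hp1 : 1 ≤ p) (hp2 : p ≤ 2)
    (A : Matrix (Fin n) (Fin d) ℝ) (hA : A.rank = d)
    (α : ℝ) (hα0 : 0 ≤ α) (hα1 : α ≤ 1) (j : Fin n)
    (B : Matrix (Fin n) (Fin d) ℝ)
    (hB : B = A.updateRow j (α • A j))
    (wA : Fin n → ℝ) (hwA : IsLewisWeights p A wA)
    (wB : Fin n → ℝ) (hwB : IsLewisWeights p B wB) :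
    ∀ i, i ≠ j → wA i ≤ wB i := by
  obtain ⟨hwApos, hwAeq⟩ := hwA
  obtain ⟨hwBpos, hwBeq⟩ := hwB
  have hp0 : 0 < p := lt_of_lt_of_le one_pos hp1
  have hp20 : 0 < p / 2 := by positivity
  -- rows of B
  have hBj : B j = α • A j := by rw [hB]; exact Matrix.updateRow_self
  have hBne : ∀ i, i ≠ j → B i = A i := by
    intro i hi
    rw [hB]
    exact Matrix.updateRow_ne hi
  -- α must be positive
  have hα : 0 < α := by
    rcases lt_or_eq_of_le hα0 with h | h
    · exact h
    · exfalso
      have := hwBeq j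
      rw [hBj, ← h, zero_smul] at this
      simp only [zero_dotProduct] at this
      rw [Real.zero_rpow (by positivity)] at this
      exact absurd this (hwBpos j).ne'
  -- mulVec of B
  have hBmul : ∀ (x : Fin d → ℝ) (i : Fin n),
      B.mulVec x i = if i = j then α * (A.mulVec x j) else A.mulVec x i := by
    intro x i
    by_cases hi : i = j
    · subst hi
      show B i ⬝ᵥ x = _
      rw [hBj, if_pos rfl, smul_dotProduct, smul_eq_mul]
      rfl
    · show B i ⬝ᵥ x = _
      rw [hBne i hi, if_neg hi]
      rfl
  have hinjA : Function.Injective A.mulVec := inj_of_rank A hA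
  have hinjB : Function.Injective B.mulVec := by
    intro x y hxy
    apply hinjA
    funext i
    have := congrFun hxy i
    rw [hBmul x i, hBmul y i] at this
    by_cases hi : i = j
    · subst hi
      rw [if_pos rfl, if_pos rfl] at this
      exact mul_left_cancel₀ hα.ne' this
    · rwa [if_neg hi, if_neg hi] at this
  -- the Gram matrices
  set gA : Fin n → ℝ := fun t => wA t ^ (1 - 2 / p) with hgA
  set gB : Fin n → ℝ := fun t => wB t ^ (1 - 2 / p) with hgB
  have hgApos : ∀ i, 0 < gA i := fun i => Real.rpow_pos_of_pos (hwApos i) _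
  have hgBpos : ∀ i, 0 < gB i := fun i => Real.rpow_pos_of_pos (hwBpos i) _
  set M := Aᵀ * Matrix.diagonal gA * A with hM
  set N := Bᵀ * Matrix.diagonal gB * B with hN
  have hMpd : M.PosDef := posdef_gram A gA hgApos hinjA
  have hNpd : N.PosDef := posdef_gram B gB hgBpos hinjB
  have hMinv_psd : ∀ x, 0 ≤ x ⬝ᵥ M⁻¹.mulVec x := by
    intro x
    have := hMpd.inv.posSemidef.dotProduct_mulVec_nonneg x
    simpa using this
  have hNinv_psd : ∀ x, 0 ≤ x ⬝ᵥ N⁻¹.mulVec x := by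
    intro x
    have := hNpd.inv.posSemidef.dotProduct_mulVec_nonneg x
    simpa using this
  rcases eq_or_lt_of_le hp2 with hp2' | hp2'
  · -- case p = 2
    subst hp2'
    have he : (1 - 2 / (2:ℝ)) = 0 := by norm_num
    have hgA1 : ∀ i, gA i = 1 := fun i => by rw [hgA]; simp [he]
    have hgB1 : ∀ i, gB i = 1 := fun i => by rw [hgB]; simp [he]
    have H : ∀ x, 1 * (x ⬝ᵥ N.mulVec x) ≤ x ⬝ᵥ M.mulVec x := by
      intro x
      rw [one_mul, hM, hN, quadform, quadform]
      apply Finset.sum_le_sum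
      intro i _
      rw [hgA1 i, hgB1 i, one_mul, one_mul, hBmul]
      by_cases hi : i = j
      · subst hi
        rw [if_pos rfl]
        have hα2 : α^2 ≤ 1 := by nlinarith
        have : (α * A.mulVec x i)^2 = α^2 * (A.mulVec x i)^2 := by ring
        rw [this]
        nlinarith [sq_nonneg (A.mulVec x i)]
      · rw [if_neg hi]
    have G := inv_quad M N hMpd hNpd 1 one_pos H
    intro i hij
    have h1 := hwAeq i
    have h2 := hwBeq i
    rw [hBne i hij] at h2
    rw [h1, h2]
    apply Real.rpow_le_rpow (hMinv_psd (A i)) _ hp20.le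
    have := G (A i)
    simpa using this
  · -- case p < 2
    set e : ℝ := 1 - 2 / p with hedef
    have he_neg : e < 0 := by
      rw [hedef]
      have : 1 < 2 / p := (one_lt_div hp0).mpr hp2'
      linarith
    have hene : e ≠ 0 := he_neg.ne
    -- the comparison ratios
    set c : Fin n → ℝ := fun i =>
      if i = j then (wA j / wB j) * α ^ (-2 / e) else wA i / wB i with hc
    have hcpos : ∀ i, 0 < c i := by
      intro i
      by_cases hi : i = j
      · simp only [hc, hi, if_pos rfl]
        exact mul_pos (div_pos (hwApos j) (hwBpos j)) (Real.rpow_pos_of_pos hα _)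
      · simp only [hc, if_neg hi]
        exact div_pos (hwApos i) (hwBpos i)
    have hne : (Finset.univ : Finset (Fin n)).Nonempty := ⟨j, Finset.mem_univ j⟩
    set ρ : ℝ := Finset.univ.sup' hne c with hρdef
    have hρ : ∀ i, c i ≤ ρ := fun i => Finset.le_sup' c (Finset.mem_univ i)
    have hρpos : 0 < ρ := lt_of_lt_of_le (hcpos j) (hρ j)
    -- key coefficient bounds
    have hcoef_ne : ∀ i, i ≠ j → ρ ^ e * gB i ≤ gA i := by
      intro i hij
      have h1 : wA i ≤ ρ * wB i := by
        have : wA i / wB i ≤ ρ := by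
          have h0 := hρ i
          simpa only [hc, if_neg hij] using h0
        exact (div_le_iff₀ (hwBpos i)).mp this
      have h2 : (ρ * wB i) ^ e ≤ (wA i) ^ e :=
        Real.rpow_le_rpow_of_nonpos (hwApos i) h1 he_neg.le
      rw [Real.mul_rpow hρpos.le (hwBpos i).le] at h2
      exact h2
    have hcoef_j : ρ ^ e * (α ^ 2 * gB j) ≤ gA j := by
      have h1 : ρ ^ e ≤ (c j) ^ e :=
        Real.rpow_le_rpow_of_nonpos (hcpos j) (hρ j) he_neg.le
      have h2 : (c j) ^ e * (α ^ 2 * gB j) = gA j := by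
        simp only [hc, if_pos rfl]
        rw [Real.mul_rpow (div_pos (hwApos j) (hwBpos j)).le (Real.rpow_pos_of_pos hα _).le]
        rw [← Real.rpow_natCast α 2, ← Real.rpow_mul hα0]
        rw [Real.div_rpow (hwApos j).le (hwBpos j).le]
        have hexp : (-2 / e) * e = -2 := by field_simp
        rw [hexp]
        rw [hgA, hgB]
        have hαne : α ^ (2:ℝ) ≠ 0 := (Real.rpow_pos_of_pos hα 2).ne'
        have hwBne : wB j ^ e ≠ 0 := (Real.rpow_pos_of_pos (hwBpos j) e).ne'
        rw [Real.rpow_neg hα0]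
        field_simp
        rw [Nat.cast_ofNat]
      calc ρ ^ e * (α ^ 2 * gB j) ≤ (c j) ^ e * (α ^ 2 * gB j) := by
            exact mul_le_mul_of_nonneg_right h1
              (mul_nonneg (sq_nonneg α) (hgBpos j).le)
        _ = gA j := h2
    -- quadratic form comparison
    have H : ∀ x, ρ ^ e * (x ⬝ᵥ N.mulVec x) ≤ x ⬝ᵥ M.mulVec x := by
      intro x
      rw [hM, hN, quadform, quadform, Finset.mul_sum]
      apply Finset.sum_le_sum
      intro i _
      rw [hBmul]
      by_cases hi : i = j
      · subst hi
        rw [if_pos rfl]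
        have expand : ρ ^ e * (gB i * (α * A.mulVec x i) ^ 2)
            = (ρ ^ e * (α ^ 2 * gB i)) * (A.mulVec x i) ^ 2 := by ring
        rw [expand]
        exact mul_le_mul_of_nonneg_right hcoef_j (sq_nonneg _)
      · rw [if_neg hi]
        have expand : ρ ^ e * (gB i * (A.mulVec x i) ^ 2)
            = (ρ ^ e * gB i) * (A.mulVec x i) ^ 2 := by ring
        rw [expand]
        exact mul_le_mul_of_nonneg_right (hcoef_ne i hi) (sq_nonneg _)
    have G := inv_quad M N hMpd hNpd (ρ ^ e) (Real.rpow_pos_of_pos hρpos e) H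
    -- scalar identity : (ρ^e)⁻¹ ^ (p/2) = ρ ^ (1 - p/2)
    have hKid : ((ρ ^ e)⁻¹) ^ (p/2) = ρ ^ (1 - p/2) := by
      rw [← Real.rpow_neg hρpos.le, ← Real.rpow_mul hρpos.le]
      congr 1
      rw [hedef]
      field_simp
      ring
    -- main per-row bounds
    have mainA : ∀ i, i ≠ j → wA i ≤ ρ ^ (1 - p/2) * wB i := by
      intro i hij
      have h1 := hwAeq i
      have h2 := hwBeq i
      rw [hBne i hij] at h2
      rw [h1, h2]
      calc (A i ⬝ᵥ M⁻¹.mulVec (A i)) ^ (p/2)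
          ≤ ((ρ ^ e)⁻¹ * (A i ⬝ᵥ N⁻¹.mulVec (A i))) ^ (p/2) :=
            Real.rpow_le_rpow (hMinv_psd (A i)) (G (A i)) hp20.le
        _ = ((ρ ^ e)⁻¹) ^ (p/2) * (A i ⬝ᵥ N⁻¹.mulVec (A i)) ^ (p/2) :=
            Real.mul_rpow (by positivity) (hNinv_psd (A i))
        _ = ρ ^ (1 - p/2) * (A i ⬝ᵥ N⁻¹.mulVec (A i)) ^ (p/2) := by rw [hKid]
    have mainJ : wA j ≤ ρ ^ (1 - p/2) * (α ^ (-p)) * wB j := by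
      set s := A j ⬝ᵥ N⁻¹.mulVec (A j) with hs
      have hsnn : 0 ≤ s := hNinv_psd (A j)
      have hBj_dot : B j ⬝ᵥ N⁻¹.mulVec (B j) = α ^ (2:ℝ) * s := by
        have h2 : α ^ (2:ℝ) = α * α := by
          rw [show (2:ℝ) = ((2:ℕ):ℝ) by norm_num, Real.rpow_natCast]
          ring
        rw [hBj, smul_dotProduct, Matrix.mulVec_smul, dotProduct_smul,
          smul_eq_mul, smul_eq_mul, h2]
        ring
      have hwBj : wB j = α ^ p * s ^ (p/2) := by
        have hexp2 : (2:ℝ) * (p/2) = p := by ring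
        rw [hwBeq j, hBj_dot, Real.mul_rpow (Real.rpow_pos_of_pos hα 2).le hsnn,
          ← Real.rpow_mul hα0, hexp2]
      have h1 : wA j ≤ ρ ^ (1 - p/2) * s ^ (p/2) := by
        rw [hwAeq j]
        calc (A j ⬝ᵥ M⁻¹.mulVec (A j)) ^ (p/2)
            ≤ ((ρ ^ e)⁻¹ * s) ^ (p/2) :=
              Real.rpow_le_rpow (hMinv_psd (A j)) (G (A j)) hp20.le
          _ = ((ρ ^ e)⁻¹) ^ (p/2) * s ^ (p/2) := Real.mul_rpow (by positivity) hsnn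
          _ = ρ ^ (1 - p/2) * s ^ (p/2) := by rw [hKid]
      have h2 : s ^ (p/2) = α ^ (-p) * wB j := by
        rw [hwBj, Real.rpow_neg hα0]
        have hαp' : α ^ p ≠ 0 := (Real.rpow_pos_of_pos hα p).ne'
        field_simp
      rw [h2] at h1
      linarith [h1]
    -- conclude
    by_contra hcon
    push_neg at hcon
    obtain ⟨i0, hi0ne, hi0⟩ := hcon
    have hρgt1 : 1 < ρ := by
      have : 1 < c i0 := by
        simp only [hc, if_neg hi0ne]
        rw [lt_div_iff₀ (hwBpos i0)]
        linarith
      exact lt_of_lt_of_le this (hρ i0)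
    obtain ⟨istar, _, hstar⟩ := Finset.exists_mem_eq_sup' hne c
    by_cases hstarj : istar = j
    · -- max ratio at row j
      have hcj : (wA j / wB j) * α ^ (-2 / e) = ρ := by
        rw [hρdef, hstar, hstarj]
        simp only [hc, if_pos rfl]
      have hαe : α ^ (-2 / e : ℝ) = (α ^ (2/e : ℝ))⁻¹ := by
        rw [neg_div, Real.rpow_neg hα0]
      have hαp : (0:ℝ) < α ^ (2/e : ℝ) := Real.rpow_pos_of_pos hα _
      have hwAj_eq : wA j = ρ * (α ^ (2/e : ℝ) * wB j) := by
        have h4 : wA j = ((wA j / wB j) * (α ^ (2/e : ℝ))⁻¹)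
            * (α ^ (2/e : ℝ) * wB j) := by
          field_simp [(hwBpos j).ne', hαp.ne']
        rw [← hαe, hcj] at h4
        exact h4
      have hcomb : ρ * α ^ (2/e : ℝ) ≤ ρ ^ (1 - p/2) * α ^ (-p) := by
        have h3 : (ρ * α ^ (2/e : ℝ)) * wB j ≤ (ρ ^ (1 - p/2) * α ^ (-p)) * wB j := by
          calc (ρ * α ^ (2/e : ℝ)) * wB j = wA j := by rw [hwAj_eq]; ring
            _ ≤ ρ ^ (1 - p/2) * α ^ (-p) * wB j := mainJ
        exact le_of_mul_le_mul_right h3 (hwBpos j)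
      have hfinal : ρ ^ (p/2) ≤ α ^ (-p - 2/e) := by
        have e1 : ρ ^ (p/2 : ℝ) = ρ ^ (1:ℝ) / ρ ^ (1 - p/2 : ℝ) := by
          rw [← Real.rpow_sub hρpos]
          congr 1
          ring
        have e2 : α ^ (-p - 2/e : ℝ) = α ^ (-p : ℝ) / α ^ (2/e : ℝ) := Real.rpow_sub hα _ _
        rw [e1, e2, Real.rpow_one,
          div_le_div_iff₀ (Real.rpow_pos_of_pos hρpos _) hαp]
        calc ρ * α ^ (2/e : ℝ) ≤ ρ ^ (1 - p/2) * α ^ (-p) := hcomb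
          _ = α ^ (-p) * ρ ^ (1 - p/2) := mul_comm _ _
      have hene' : (1:ℝ) - 2/p ≠ 0 := by rw [← hedef]; exact hene
      have hexp_nn : 0 ≤ -p - 2/e := by
        rw [hedef]
        have h2p : (0:ℝ) < 2 - p := by linarith
        have hpm2 : p - 2 ≠ 0 := by
          intro h; rw [show p = (2:ℝ) by linarith] at hp2'; linarith
        have hkey : -p - 2 / (1 - 2/p) = p^2 / (2 - p) := by
          have h1' : 1 - 2/p = (p-2)/p := by field_simp
          rw [h1', div_div_eq_mul_div, eq_div_iff h2p.ne']
          field_simp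
          ring
        rw [hkey]
        positivity
      have hle1 : α ^ (-p - 2/e) ≤ 1 := Real.rpow_le_one hα0 hα1 hexp_nn
      have hle : ρ ^ (p/2) ≤ 1 := le_trans hfinal hle1
      have hgt : 1 < ρ ^ (p/2) := by
        rw [Real.one_lt_rpow_iff_of_pos hρpos]
        left
        exact ⟨hρgt1, hp20⟩
      linarith
    · -- max ratio at row istar ≠ j
      have hceq : wA istar / wB istar = ρ := by
        rw [hρdef, hstar]
        simp only [hc, if_neg hstarj]
      have hwAeq' : wA istar = ρ * wB istar := by
        rw [← hceq, div_mul_cancel₀ _ (hwBpos istar).ne']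
      have := mainA istar hstarj
      rw [hwAeq'] at this
      have hρle : ρ ≤ ρ ^ (1 - p/2) :=
        le_of_mul_le_mul_right (by linarith [this]) (hwBpos istar)
      have : (1:ℝ) ≤ 1 - p/2 := by
        rw [← Real.rpow_le_rpow_left_iff hρgt1, Real.rpow_one]
        exact hρle
      linarith
end
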